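/- Let T_1, T_2 be Hadamard spaces. Then δ(T_1 × T_2) ≤ max{δ(T_1), δ(T_2)}, where T_1 × T_2 carries the l²-product metric. In particular, if δ(T_1) = δ(T_2) = 0, then δ(T_1 × T_2) = 0. -/

import Mathlib

open Filter Metric Set Topology

/-- A Hadamard space: a complete metric space with midpoints satisfying the CN
(comparison) inequality of CAT(0) geometry. -/
class HadamardSpace (Y : Type*) [MetricSpace Y] : Prop where
  complete : CompleteSpace Y
  midpoints : ∀ x y : Y, ∃ m : Y, dist x m = dist x y / 2 ∧ dist m y = dist x y / 2
  cn : ∀ x y z m : Y, dist y m = dist y z / 2 → dist m z = dist y z / 2 →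
    dist x m ^ 2 ≤ dist x y ^ 2 / 2 + dist x z ^ 2 / 2 - dist y z ^ 2 / 4

/-- `b` is the barycenter of the points `v` with weights `t`: it minimizes the
weighted sum of squared distances. -/
def IsWBarycenter {T : Type*} [MetricSpace T] {ι : Type*} [Fintype ι]
    (b : T) (v : ι → T) (t : ι → ℝ) : Prop :=
  ∀ q : T, ∑ i, t i * dist (v i) b ^ 2 ≤ ∑ i, t i * dist (v i) q ^ 2

/-- A Euclidean realization of the configuration `v` with barycenter `b`. -/
def IsRealization {T : Type*} [MetricSpace T] {ι : Type*} {N : ℕ}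
    (b : T) (v : ι → T) (w : ι → EuclideanSpace ℝ (Fin N)) : Prop :=
  (∀ i, ‖w i‖ = dist b (v i)) ∧ ∀ i j, ‖w i - w j‖ ≤ dist (v i) (v j)

/-- The invariant `δ({v_i},{t_i})` of a weighted configuration with barycenter `b`. -/
noncomputable def deltaConfig {T : Type*} [MetricSpace T] {m : ℕ}
    (b : T) (v : Fin m → T) (t : Fin m → ℝ) : ℝ :=
  sInf {r : ℝ | ∃ (N : ℕ) (w : Fin m → EuclideanSpace ℝ (Fin N)),
    IsRealization b v w ∧ r = ‖∑ i, t i • w i‖ ^ 2 / ∑ i, t i * ‖w i‖ ^ 2}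

/-- The invariant `δ(T, v)`: supremum of `δ` over configurations of distinct points with
positive weights summing to `1` whose barycenter is `v`. -/
noncomputable def deltaAt (T : Type*) [MetricSpace T] (v : T) : ℝ :=
  sSup {r : ℝ | ∃ (m : ℕ) (vv : Fin m → T) (t : Fin m → ℝ),
    Function.Injective vv ∧ (∀ i, 0 < t i) ∧ (∑ i, t i = 1) ∧
    IsWBarycenter v vv t ∧ r = deltaConfig v vv t}

/-- The invariant `δ(T)`: supremum of `δ` over all weighted configurations. -/
noncomputable def deltaTotal (T : Type*) [MetricSpace T] : ℝ :=
  sSup {r : ℝ | ∃ (m : ℕ) (vv : Fin m → T) (t : Fin m → ℝ) (b : T),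
    Function.Injective vv ∧ (∀ i, 0 < t i) ∧ (∑ i, t i = 1) ∧
    IsWBarycenter b vv t ∧ r = deltaConfig b vv t}



noncomputable def lineVec (d : ℝ) : EuclideanSpace ℝ (Fin 1) := EuclideanSpace.single 0 d

lemma lineVec_norm (d : ℝ) : ‖lineVec d‖ = |d| := by
  simp [lineVec, EuclideanSpace.norm_single]

lemma lineVec_sub (d e : ℝ) : lineVec d - lineVec e = lineVec (d - e) := by
  ext j
  simp [lineVec, EuclideanSpace.single_apply]
  split <;> simp

lemma lineVec_smul (t d : ℝ) : t • lineVec d = lineVec (t * d) := by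
  ext j
  simp [lineVec, EuclideanSpace.single_apply]

lemma lineVec_sum {m : ℕ} (f : Fin m → ℝ) : ∑ i, lineVec (f i) = lineVec (∑ i, f i) := by
  ext j
  rw [WithLp.ofLp_sum, Finset.sum_apply]
  simp [lineVec, EuclideanSpace.single_apply]

section helpers

variable {T : Type*} [MetricSpace T] {m : ℕ}

/-- The defining set of `deltaConfig`. -/
def realValSet (b : T) (v : Fin m → T) (t : Fin m → ℝ) : Set ℝ :=
  {r : ℝ | ∃ (N : ℕ) (w : Fin m → EuclideanSpace ℝ (Fin N)),
    IsRealization b v w ∧ r = ‖∑ i, t i • w i‖ ^ 2 / ∑ i, t i * ‖w i‖ ^ 2}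

lemma deltaConfig_eq (b : T) (v : Fin m → T) (t : Fin m → ℝ) :
    deltaConfig b v t = sInf (realValSet b v t) := rfl

lemma realValSet_nonneg {b : T} {v : Fin m → T} {t : Fin m → ℝ} (ht : ∀ i, 0 ≤ t i)
    {r : ℝ} (hr : r ∈ realValSet b v t) : 0 ≤ r := by
  obtain ⟨N, w, _, rfl⟩ := hr
  exact div_nonneg (by positivity) (Finset.sum_nonneg fun i _ => mul_nonneg (ht i) (sq_nonneg _))

lemma line_mem (b : T) (v : Fin m → T) (t : Fin m → ℝ) :
    (∑ i, t i * dist b (v i)) ^ 2 / ∑ i, t i * dist b (v i) ^ 2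
      ∈ realValSet b v t := by
  refine ⟨1, fun i => lineVec (dist b (v i)), ⟨fun i => ?_, fun i j => ?_⟩, ?_⟩
  · rw [lineVec_norm, abs_of_nonneg dist_nonneg]
  · rw [lineVec_sub, lineVec_norm, dist_comm b (v i), dist_comm b (v j)]
    exact abs_dist_sub_le (v i) (v j) b
  · simp only []
    rw [show (∑ i, t i • lineVec (dist b (v i))) = lineVec (∑ i, t i * dist b (v i)) by
      rw [← lineVec_sum]; exact Finset.sum_congr rfl fun i _ => lineVec_smul _ _]
    rw [lineVec_norm, sq_abs]
    congr 1
    exact Finset.sum_congr rfl fun i _ => by rw [lineVec_norm, sq_abs]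

lemma deltaConfig_nonneg {b : T} {v : Fin m → T} {t : Fin m → ℝ} (ht : ∀ i, 0 ≤ t i) :
    0 ≤ deltaConfig b v t :=
  Real.sInf_nonneg fun _ hr => realValSet_nonneg ht hr

lemma deltaConfig_le_one {b : T} {v : Fin m → T} {t : Fin m → ℝ} (ht : ∀ i, 0 ≤ t i)
    (hs : ∑ i, t i = 1) : deltaConfig b v t ≤ 1 := by
  set d : Fin m → ℝ := fun i => dist b (v i) with hd
  have hle : (∑ i, t i * d i) ^ 2 / ∑ i, t i * d i ^ 2 ≤ 1 := by
    apply div_le_one_of_le₀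
    · calc (∑ i, t i * d i) ^ 2
          = (∑ i, Real.sqrt (t i) * (Real.sqrt (t i) * d i)) ^ 2 := by
            congr 1; apply Finset.sum_congr rfl; intro i _
            rw [← mul_assoc, Real.mul_self_sqrt (ht i)]
        _ ≤ (∑ i, Real.sqrt (t i) ^ 2) * ∑ i, (Real.sqrt (t i) * d i) ^ 2 :=
            Finset.sum_mul_sq_le_sq_mul_sq _ _ _
        _ = ∑ i, t i * d i ^ 2 := by
            rw [show (∑ i, Real.sqrt (t i) ^ 2) = 1 by
              rw [← hs]; exact Finset.sum_congr rfl fun i _ => Real.sq_sqrt (ht i)]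
            rw [one_mul]
            exact Finset.sum_congr rfl fun i _ => by
              rw [mul_pow, Real.sq_sqrt (ht i)]
    · exact Finset.sum_nonneg fun i _ => mul_nonneg (ht i) (sq_nonneg _)
  calc deltaConfig b v t ≤ (∑ i, t i * d i) ^ 2 / ∑ i, t i * d i ^ 2 :=
        csInf_le ⟨0, fun r hr => realValSet_nonneg ht hr⟩ (line_mem b v t)
    _ ≤ 1 := hle

lemma realValSet_nonempty (b : T) (v : Fin m → T) (t : Fin m → ℝ) :
    (realValSet b v t).Nonempty := ⟨_, line_mem b v t⟩

end helpers


lemma merge_config {T : Type*} [MetricSpace T]  {m : ℕ} (b : T) (v : Fin m → T) (t : Fin m → ℝ)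
    (ht : ∀ i, 0 < t i) (hs : ∑ i, t i = 1) (hb : IsWBarycenter b v t) :
    ∃ (k : ℕ) (vv : Fin k → T) (t' : Fin k → ℝ) (c : Fin m → Fin k),
      Function.Injective vv ∧ (∀ j, 0 < t' j) ∧ (∑ j, t' j = 1) ∧
      IsWBarycenter b vv t' ∧ (∀ i, vv (c i) = v i) ∧
      (∀ (M : Type) (_ : AddCommMonoid M) (_ : Module ℝ M) (u : Fin k → M),
        ∑ i, t i • u (c i) = ∑ j, t' j • u j) := by
  classical
  set S : Finset T := Finset.image v Finset.univ with hS
  set e : {x // x ∈ S} ≃ Fin S.card := S.equivFin with he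
  have hmem : ∀ i, v i ∈ S := fun i => Finset.mem_image_of_mem v (Finset.mem_univ i)
  set c : Fin m → Fin S.card := fun i => e ⟨v i, hmem i⟩ with hc
  set vv : Fin S.card → T := fun j => (e.symm j : T) with hvv
  set t' : Fin S.card → ℝ := fun j => ∑ i ∈ Finset.univ.filter (fun i => c i = j), t i with ht'
  have hvc : ∀ i, vv (c i) = v i := by
    intro i; simp [hvv, hc]
  have hkey : ∀ (M : Type) (_ : AddCommMonoid M) (_ : Module ℝ M) (u : Fin S.card → M),
      ∑ i, t i • u (c i) = ∑ j, t' j • u j := by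
    intro M _ _ u
    rw [← Finset.sum_fiberwise Finset.univ c (fun i => t i • u (c i))]
    refine Finset.sum_congr rfl fun j _ => ?_
    rw [ht', Finset.sum_smul]
    refine Finset.sum_congr rfl fun i hi => ?_
    rw [(Finset.mem_filter.mp hi).2]
  have hsurj : ∀ j, ∃ i, c i = j := by
    intro j
    obtain ⟨i, -, hi⟩ := Finset.mem_image.mp (e.symm j).2
    refine ⟨i, ?_⟩
    have : (⟨v i, hmem i⟩ : {x // x ∈ S}) = e.symm j := Subtype.ext hi
    show e ⟨v i, hmem i⟩ = j
    rw [this]; simp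
  refine ⟨S.card, vv, t', c, ?_, ?_, ?_, ?_, hvc, hkey⟩
  · exact Subtype.val_injective.comp e.symm.injective
  · intro j
    obtain ⟨i, hi⟩ := hsurj j
    exact Finset.sum_pos (fun i _ => ht i)
      ⟨i, Finset.mem_filter.mpr ⟨Finset.mem_univ i, hi⟩⟩
  · have := hkey ℝ inferInstance inferInstance (fun _ => (1 : ℝ))
    simpa [hs] using this.symm
  · intro q
    have h1 := hkey ℝ inferInstance inferInstance (fun j => dist (vv j) b ^ 2)
    have h2 := hkey ℝ inferInstance inferInstance (fun j => dist (vv j) q ^ 2)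
    simp only [smul_eq_mul, hvc] at h1 h2
    rw [← h1, ← h2]
    exact hb q

section more

variable {T : Type*} [MetricSpace T] {m : ℕ}

lemma deltaTotal_nonneg (T : Type*) [MetricSpace T] : 0 ≤ deltaTotal T := by
  apply Real.sSup_nonneg
  rintro r ⟨m, vv, t, b, -, hpos, -, -, rfl⟩
  exact deltaConfig_nonneg fun i => (hpos i).le

lemma exists_good_realization (b : T) (v : Fin m → T) (t : Fin m → ℝ)
    (ht : ∀ i, 0 < t i) (hs : ∑ i, t i = 1) (hb : IsWBarycenter b v t)
    {ε : ℝ} (hε : 0 < ε) :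
    ∃ (N : ℕ) (w : Fin m → EuclideanSpace ℝ (Fin N)),
      IsRealization b v w ∧
      ‖∑ i, t i • w i‖ ^ 2 / ∑ i, t i * ‖w i‖ ^ 2 ≤ deltaTotal T + ε := by
  obtain ⟨k, vv, t', c, hinj, hpos, hsum, hbar, hvc, hkey⟩ :=
    merge_config b v t ht hs hb
  have hbdd : BddAbove {r : ℝ | ∃ (m : ℕ) (vv : Fin m → T) (t : Fin m → ℝ) (b : T),
      Function.Injective vv ∧ (∀ i, 0 < t i) ∧ (∑ i, t i = 1) ∧
      IsWBarycenter b vv t ∧ r = deltaConfig b vv t} := by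
    refine ⟨1, ?_⟩
    rintro r ⟨m', vv', t'', b', -, hpos', hsum', -, rfl⟩
    exact deltaConfig_le_one (fun i => (hpos' i).le) hsum'
  have hδ : deltaConfig b vv t' ≤ deltaTotal T :=
    le_csSup hbdd ⟨k, vv, t', b, hinj, hpos, hsum, hbar, rfl⟩
  obtain ⟨r, hr, hlt⟩ := Real.lt_sInf_add_pos (realValSet_nonempty b vv t') hε
  obtain ⟨N, w', hreal, rfl⟩ := hr
  rw [← deltaConfig_eq] at hlt
  refine ⟨N, fun i => w' (c i), ⟨fun i => ?_, fun i j => ?_⟩, ?_⟩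
  · rw [hreal.1 (c i), hvc i]
  · have := hreal.2 (c i) (c j); rwa [hvc i, hvc j] at this
  · have h1 : ∑ i, t i • w' (c i) = ∑ j, t' j • w' j :=
      hkey (EuclideanSpace ℝ (Fin N)) inferInstance inferInstance w'
    have h2 : ∑ i, t i * ‖w' (c i)‖ ^ 2 = ∑ j, t' j * ‖w' j‖ ^ 2 := by
      have := hkey ℝ inferInstance inferInstance (fun j => ‖w' j‖ ^ 2)
      simpa [smul_eq_mul] using this
    rw [h1, h2]
    exact le_trans hlt.le (by linarith)

end more

section prodfacts

variable {T₁ T₂ : Type*} [MetricSpace T₁] [MetricSpace T₂] {m : ℕ}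

lemma prod_dist_sq (x y : WithLp 2 (T₁ × T₂)) :
    dist x y ^ 2 = dist x.fst y.fst ^ 2 + dist x.snd y.snd ^ 2 := by
  have h := WithLp.prod_dist_eq_add (p := 2) (α := T₁) (β := T₂)
    (by simp [ENNReal.toReal_ofNat]) x y
  simp only [ENNReal.toReal_ofNat] at h
  have ha : (0:ℝ) ≤ dist x.fst y.fst ^ (2:ℝ) + dist x.snd y.snd ^ (2:ℝ) := by positivity
  rw [h, ← Real.rpow_natCast (_ ^ ((1:ℝ)/2)) 2, ← Real.rpow_mul ha]
  norm_num

lemma bary_fst {b : WithLp 2 (T₁ × T₂)} {v : Fin m → WithLp 2 (T₁ × T₂)} {t : Fin m → ℝ}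
    (hb : IsWBarycenter b v t) : IsWBarycenter b.fst (fun i => (v i).fst) t := by
  intro q
  have h := hb ((WithLp.equiv 2 (T₁ × T₂)).symm (q, b.snd))
  simp only [prod_dist_sq, WithLp.equiv_symm_apply, WithLp.toLp_fst, WithLp.toLp_snd, mul_add,
    Finset.sum_add_distrib] at h
  simpa using le_of_add_le_add_right h

lemma bary_snd {b : WithLp 2 (T₁ × T₂)} {v : Fin m → WithLp 2 (T₁ × T₂)} {t : Fin m → ℝ}
    (hb : IsWBarycenter b v t) : IsWBarycenter b.snd (fun i => (v i).snd) t := by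
  intro q
  have h := hb ((WithLp.equiv 2 (T₁ × T₂)).symm (b.fst, q))
  simp only [prod_dist_sq, WithLp.equiv_symm_apply, WithLp.toLp_fst, WithLp.toLp_snd, mul_add,
    Finset.sum_add_distrib] at h
  simpa using le_of_add_le_add_left h

lemma combine_realizations {N₁ N₂ : ℕ} (w₁ : Fin m → EuclideanSpace ℝ (Fin N₁))
    (w₂ : Fin m → EuclideanSpace ℝ (Fin N₂)) (t : Fin m → ℝ) :
    ∃ (N : ℕ) (w : Fin m → EuclideanSpace ℝ (Fin N)),
      (∀ i, ‖w i‖ ^ 2 = ‖w₁ i‖ ^ 2 + ‖w₂ i‖ ^ 2) ∧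
      (∀ i j, ‖w i - w j‖ ^ 2 = ‖w₁ i - w₁ j‖ ^ 2 + ‖w₂ i - w₂ j‖ ^ 2) ∧
      ‖∑ i, t i • w i‖ ^ 2 = ‖∑ i, t i • w₁ i‖ ^ 2 + ‖∑ i, t i • w₂ i‖ ^ 2 := by
  set E := WithLp 2 (EuclideanSpace ℝ (Fin N₁) × EuclideanSpace ℝ (Fin N₂)) with hE
  set L := (stdOrthonormalBasis ℝ E).repr with hL
  set lin : E ≃ₗ[ℝ] (EuclideanSpace ℝ (Fin N₁) × EuclideanSpace ℝ (Fin N₂)) :=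
    WithLp.linearEquiv 2 ℝ _ with hlin
  set u : Fin m → E := fun i => lin.symm (w₁ i, w₂ i) with hu
  have hufst : ∀ i, (u i).fst = w₁ i := fun i => rfl
  have husnd : ∀ i, (u i).snd = w₂ i := fun i => rfl
  refine ⟨_, fun i => L (u i), fun i => ?_, fun i j => ?_, ?_⟩
  · rw [L.norm_map, WithLp.prod_norm_sq_eq_of_L2, hufst, husnd]
  · rw [← map_sub, L.norm_map, WithLp.prod_norm_sq_eq_of_L2,
      WithLp.sub_fst, WithLp.sub_snd, hufst, hufst, husnd, husnd]
  · have hsum : ∑ i, t i • u i = lin.symm (∑ i, t i • w₁ i, ∑ i, t i • w₂ i) := by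
      have hpair : (∑ i, (t i • w₁ i, t i • w₂ i))
          = ((∑ i, t i • w₁ i, ∑ i, t i • w₂ i)
            : EuclideanSpace ℝ (Fin N₁) × EuclideanSpace ℝ (Fin N₂)) := by
        apply Prod.ext
        · exact (map_sum (AddMonoidHom.fst (EuclideanSpace ℝ (Fin N₁)) (EuclideanSpace ℝ (Fin N₂)))
            (fun i => (t i • w₁ i, t i • w₂ i)) Finset.univ)
        · exact (map_sum (AddMonoidHom.snd (EuclideanSpace ℝ (Fin N₁)) (EuclideanSpace ℝ (Fin N₂)))
            (fun i => (t i • w₁ i, t i • w₂ i)) Finset.univ)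
      rw [← hpair]
      rw [map_sum lin.symm]
      refine Finset.sum_congr rfl fun i _ => ?_
      rw [hu]
      rw [show (t i • w₁ i, t i • w₂ i) = t i • (w₁ i, w₂ i) from rfl, map_smul]
    rw [show (∑ i, t i • L (u i)) = L (∑ i, t i • u i) by
        rw [map_sum L]; exact Finset.sum_congr rfl fun i _ => (map_smul L _ _).symm]
    rw [L.norm_map, hsum, WithLp.prod_norm_sq_eq_of_L2]
    rfl

end prodfacts

/-- `δ(T₁ × T₂) ≤ max{δ(T₁), δ(T₂)}` for the `l²`-product of two Hadamard spaces;
in particular the product of two flexible Hadamard spaces is flexible. -/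
theorem stmt7 {T₁ T₂ : Type*} [MetricSpace T₁] [MetricSpace T₂]
    [HadamardSpace T₁] [HadamardSpace T₂] :
    deltaTotal (WithLp 2 (T₁ × T₂)) ≤ max (deltaTotal T₁) (deltaTotal T₂) ∧
    (deltaTotal T₁ = 0 → deltaTotal T₂ = 0 → deltaTotal (WithLp 2 (T₁ × T₂)) = 0) := by
  have hmax0 : 0 ≤ max (deltaTotal T₁) (deltaTotal T₂) :=
    le_max_of_le_left (deltaTotal_nonneg T₁)
  have hmain : deltaTotal (WithLp 2 (T₁ × T₂)) ≤ max (deltaTotal T₁) (deltaTotal T₂) := by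
    apply Real.sSup_le _ hmax0
    rintro r ⟨m, vv, t, b, hinj, hpos, hsum, hbar, rfl⟩
    refine le_of_forall_pos_le_add ?_
    intro ε hε
    obtain ⟨N₁, w₁, hr1, hv1⟩ := exists_good_realization b.fst (fun i => (vv i).fst) t
      hpos hsum (bary_fst hbar) hε
    obtain ⟨N₂, w₂, hr2, hv2⟩ := exists_good_realization b.snd (fun i => (vv i).snd) t
      hpos hsum (bary_snd hbar) hε
    obtain ⟨N, w, hn, hdiff, hsumsq⟩ := combine_realizations w₁ w₂ t
    set M := max (deltaTotal T₁) (deltaTotal T₂) + ε with hM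
    have hM0 : 0 ≤ M := by positivity
    have hreal : IsRealization b vv w := by
      constructor
      · intro i
        have h1 : ‖w i‖ ^ 2 = dist b (vv i) ^ 2 := by
          rw [hn i, hr1.1 i, hr2.1 i, prod_dist_sq]
        have := congrArg Real.sqrt h1
        rwa [Real.sqrt_sq (norm_nonneg _), Real.sqrt_sq dist_nonneg] at this
      · intro i j
        have h2 : ‖w i - w j‖ ^ 2 ≤ dist (vv i) (vv j) ^ 2 := by
          rw [hdiff i j, prod_dist_sq]
          exact add_le_add (pow_le_pow_left₀ (norm_nonneg _) (hr1.2 i j) 2)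
            (pow_le_pow_left₀ (norm_nonneg _) (hr2.2 i j) 2)
        have := Real.sqrt_le_sqrt h2
        rwa [Real.sqrt_sq (norm_nonneg _), Real.sqrt_sq dist_nonneg] at this
    set A₁ := ‖∑ i, t i • w₁ i‖ ^ 2 with hA₁
    set A₂ := ‖∑ i, t i • w₂ i‖ ^ 2 with hA₂
    set D₁ := ∑ i, t i * ‖w₁ i‖ ^ 2 with hD₁
    set D₂ := ∑ i, t i * ‖w₂ i‖ ^ 2 with hD₂
    have hD₁0 : 0 ≤ D₁ := Finset.sum_nonneg fun i _ => mul_nonneg (hpos i).le (sq_nonneg _)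
    have hD₂0 : 0 ≤ D₂ := Finset.sum_nonneg fun i _ => mul_nonneg (hpos i).le (sq_nonneg _)
    have key : ∀ (A D : ℝ) (δ : ℝ), 0 ≤ A → 0 ≤ D → (D = 0 → A = 0) → A / D ≤ δ + ε →
        δ ≤ max (deltaTotal T₁) (deltaTotal T₂) → A ≤ M * D := by
      intro A D δ hA hD hzero hdiv hδ
      rcases eq_or_lt_of_le hD with h | h
      · rw [hzero h.symm, ← h]; simp
      · rw [div_le_iff₀ h] at hdiv
        calc A ≤ (δ + ε) * D := hdiv
          _ ≤ M * D := by apply mul_le_mul_of_nonneg_right _ hD; rw [hM]; linarith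
    have hz1 : D₁ = 0 → A₁ = 0 := by
      intro h
      have hw : ∀ i ∈ Finset.univ, w₁ i = 0 := by
        intro i _
        have := (Finset.sum_eq_zero_iff_of_nonneg
          (fun i _ => mul_nonneg (hpos i).le (sq_nonneg (‖w₁ i‖)))).mp h i (Finset.mem_univ i)
        have hnorm : ‖w₁ i‖ = 0 := by
          rcases mul_eq_zero.mp this with h' | h'
          · exact absurd h' (hpos i).ne'
          · exact pow_eq_zero_iff (by norm_num) |>.mp h'
        exact norm_eq_zero.mp hnorm
      rw [hA₁, Finset.sum_congr rfl fun i hi => by rw [hw i hi, smul_zero]]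
      simp
    have hz2 : D₂ = 0 → A₂ = 0 := by
      intro h
      have hw : ∀ i ∈ Finset.univ, w₂ i = 0 := by
        intro i _
        have := (Finset.sum_eq_zero_iff_of_nonneg
          (fun i _ => mul_nonneg (hpos i).le (sq_nonneg (‖w₂ i‖)))).mp h i (Finset.mem_univ i)
        have hnorm : ‖w₂ i‖ = 0 := by
          rcases mul_eq_zero.mp this with h' | h'
          · exact absurd h' (hpos i).ne'
          · exact pow_eq_zero_iff (by norm_num) |>.mp h'
        exact norm_eq_zero.mp hnorm
      rw [hA₂, Finset.sum_congr rfl fun i hi => by rw [hw i hi, smul_zero]]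
      simp
    have hA1M : A₁ ≤ M * D₁ := key A₁ D₁ (deltaTotal T₁) (sq_nonneg _) hD₁0 hz1 hv1
      (le_max_left _ _)
    have hA2M : A₂ ≤ M * D₂ := key A₂ D₂ (deltaTotal T₂) (sq_nonneg _) hD₂0 hz2 hv2
      (le_max_right _ _)
    have hDeq : ∑ i, t i * ‖w i‖ ^ 2 = D₁ + D₂ := by
      rw [hD₁, hD₂, ← Finset.sum_add_distrib]
      exact Finset.sum_congr rfl fun i _ => by rw [hn i, mul_add]
    have hmem : ‖∑ i, t i • w i‖ ^ 2 / ∑ i, t i * ‖w i‖ ^ 2 ∈ realValSet b vv t :=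
      ⟨N, w, hreal, rfl⟩
    have hstep : deltaConfig b vv t ≤ ‖∑ i, t i • w i‖ ^ 2 / ∑ i, t i * ‖w i‖ ^ 2 := by
      rw [deltaConfig_eq]
      exact csInf_le ⟨0, fun r hr => realValSet_nonneg (fun i => (hpos i).le) hr⟩ hmem
    have hval : ‖∑ i, t i • w i‖ ^ 2 / ∑ i, t i * ‖w i‖ ^ 2 ≤ M := by
      rw [hsumsq, hDeq]
      exact div_le_of_le_mul₀ (by linarith) hM0 (by linarith)
    exact le_trans hstep (le_trans hval (le_of_eq hM))
  refine ⟨hmain, fun h1 h2 => ?_⟩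
  have h0 := deltaTotal_nonneg (WithLp 2 (T₁ × T₂))
  rw [h1, h2] at hmain
  simp only [max_self] at hmain
  linarith
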